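/- arXiv:2505.13095 — 2 statements merged into one kernel-verified Lean document; each statement's English description precedes it below -/
import Mathlib

section
/- Let f be a family of functions assigning a nonnegative real number f(v) to each finitely-indexed family v of nonnegative reals, and let C_f be the associated convex roof coherence measure. Suppose that for every tripartite pure state |φ⟩_ABC = Σ_{i,j,k} c_{ijk} |i⟩_A|j⟩_B|k⟩_C with Σ_{i,j,k} |c_{ijk}|² = 1, one has C_f(|φ⟩_ABC) ≥ Σ_{i : p_i > 0} p_i C_f(|α_i⟩_A) + Σ_{j : q_j > 0} q_j C_f(|β_j⟩_B) + Σ_{k : r_k > 0} r_k C_f(|γ_k⟩_C), where p_i = Σ_{j,k} |c_{ijk}|², q_j = Σ_{i,k} |c_{ijk}|², r_k = Σ_{i,j} |c_{ijk}|², |α_i⟩_A = (1/√p_i) Σ_{j,k} c_{ijk} |i⟩_A (i.e., the phase-weighted basis states appearing in the decomposition ρ_A = Σ_i p_i |α_i⟩⟨α_i|_A), and similarly for |β_j⟩_B and |γ_k⟩_C. Then C_f is superadditive for tripartite states: for every tripartite density matrix ρ_ABC, C_f(ρ_ABC) ≥ C_f(ρ_A) + C_f(ρ_B) + C_f(ρ_C),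 where ρ_A, ρ_B, ρ_C are the single-party reduced density matrices of ρ_ABC. -/
noncomputable section

open scoped ComplexOrder

/-- The outer product `|φ⟩⟨φ|` of a vector with itself. -/
def outer {ι : Type} (φ : ι → ℂ) : Matrix ι ι ℂ :=
  Matrix.of fun i i' => φ i * (starRingEnd ℂ) (φ i')

/-- A pure state: a unit vector in the fixed computational basis. -/
def IsUnitVec {ι : Type} [Fintype ι] (φ : ι → ℂ) : Prop :=
  ∑ i, ‖φ i‖ ^ 2 = 1

/-- A density matrix: positive semidefinite with trace one. -/
def IsDensity {ι : Type} [Fintype ι] (ρ : Matrix ι ι ℂ) : Prop :=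
  ρ.PosSemidef ∧ ρ.trace = 1

/-- The coherence measure on pure states: `C_f(|φ⟩) = f((|c_i|²)_i)`. -/
def pureCoh (f : (ι : Type) → [Fintype ι] → (ι → ℝ) → ℝ)
    {ι : Type} [Fintype ι] (φ : ι → ℂ) : ℝ :=
  f ι fun i => ‖φ i‖ ^ 2

/-- The convex roof extension of `C_f` to density matrices:
`C_f(ρ) = inf Σ_k p_k C_f(|φ_k⟩)` over finite ensembles `ρ = Σ_k p_k |φ_k⟩⟨φ_k|`. -/
def mixedCoh (f : (ι : Type) → [Fintype ι] → (ι → ℝ) → ℝ)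
    {ι : Type} [Fintype ι] (ρ : Matrix ι ι ℂ) : ℝ :=
  sInf { x : ℝ | ∃ (K : ℕ) (p : Fin K → ℝ) (φ : Fin K → ι → ℂ),
    (∀ k, 0 ≤ p k) ∧ (∑ k, p k) = 1 ∧ (∀ k, IsUnitVec (φ k)) ∧
    ρ = ∑ k, Complex.ofReal (p k) • outer (φ k) ∧
    x = ∑ k, p k * pureCoh f (φ k) }

open Matrix

lemma outer_posSemidef {ι : Type} [Fintype ι] (φ : ι → ℂ) :
    (outer φ).PosSemidef := by
  refine Matrix.PosSemidef.of_dotProduct_mulVec_nonneg ?_ ?_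
  · ext i j
    simp [outer, Matrix.conjTranspose_apply, mul_comm]
  · intro x
    set z := ∑ i, (starRingEnd ℂ) (φ i) * x i with hz
    have h1 : (outer φ) *ᵥ x = fun i => φ i * z := by
      funext i
      simp only [Matrix.mulVec, dotProduct, outer, Matrix.of_apply, hz,
        Finset.mul_sum, mul_assoc]
    rw [h1]
    have h2 : star x ⬝ᵥ (fun i => φ i * z) = star z * z := by
      simp only [dotProduct, Pi.star_apply, hz, star_sum, star_mul',
        Finset.sum_mul, RingHom.id_apply, RingHomCompTriple.comp_apply]
      apply Finset.sum_congr rfl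
      intro i _
      simp only [starRingEnd_apply, star_star]
      ring
    rw [h2]
    exact star_mul_self_nonneg z

open scoped MatrixOrder in
lemma ensemble_exists {ι : Type} [Fintype ι] [DecidableEq ι] {ρ : Matrix ι ι ℂ}
    (h : ρ.PosSemidef) :
    ∃ (p : ι → ℝ) (φ : ι → ι → ℂ), (∀ m, 0 ≤ p m) ∧
      (∀ m, ρ m m = Complex.ofReal (p m)) ∧ (∀ m, IsUnitVec (φ m)) ∧
      ρ = ∑ m, Complex.ofReal (p m) • outer (φ m) := by
  set S := CFC.sqrt ρ with hS
  have hherm : S.IsHermitian := (Matrix.nonneg_iff_posSemidef.mp (CFC.sqrt_nonneg ρ)).1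
  have hmul : S * S = ρ := CFC.sqrt_mul_sqrt_self ρ (Matrix.nonneg_iff_posSemidef.mpr h)
  have hent : ∀ i i', ρ i i' = ∑ m, S i m * (starRingEnd ℂ) (S i' m) := by
    intro i i'
    rw [← hmul, Matrix.mul_apply]
    refine Finset.sum_congr rfl fun m _ => ?_
    rw [← hherm.apply i' m, starRingEnd_apply, star_star]
  set p : ι → ℝ := fun m => ∑ i, ‖S i m‖ ^ 2 with hp
  have hp0 : ∀ m, 0 ≤ p m := fun m => Finset.sum_nonneg fun i _ => sq_nonneg _
  have hnormsym : ∀ i m, ‖S i m‖ = ‖S m i‖ := by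
    intro i m
    rw [← hherm.apply m i, norm_star]
  have hdiag : ∀ m, ρ m m = Complex.ofReal (p m) := by
    intro m
    rw [hent m m, hp]
    push_cast
    refine Finset.sum_congr rfl fun i _ => ?_
    rw [hnormsym i m, Complex.mul_conj']
  set φ : ι → ι → ℂ := fun m =>
    if p m = 0 then (fun x => if x = m then 1 else 0)
    else fun i => (Real.sqrt (p m) : ℂ)⁻¹ * S i m with hφ
  have hSzero : ∀ m, p m = 0 → ∀ i, S i m = 0 := by
    intro m hm i
    have h1 : ‖S i m‖ ^ 2 = 0 := by
      have := (Finset.sum_eq_zero_iff_of_nonneg (fun i _ => sq_nonneg ‖S i m‖)).mp ?_ i (Finset.mem_univ i)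
      · exact this
      · exact hm
    simpa using h1
  have hunit : ∀ m, IsUnitVec (φ m) := by
    intro m
    rw [hφ]
    by_cases hm : p m = 0
    · simp [IsUnitVec, hm, apply_ite, Finset.sum_ite_eq']
    · simp only [IsUnitVec, if_neg hm]
      have hsq : ∀ i, ‖(Real.sqrt (p m) : ℂ)⁻¹ * S i m‖ ^ 2 = (p m)⁻¹ * ‖S i m‖ ^ 2 := by
        intro i
        rw [norm_mul, mul_pow, norm_inv, Complex.norm_real, Real.norm_eq_abs,
          abs_of_nonneg (Real.sqrt_nonneg _), inv_pow, Real.sq_sqrt (hp0 m)]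
      simp only [hsq, ← Finset.mul_sum]
      exact inv_mul_cancel₀ hm
  refine ⟨p, φ, hp0, hdiag, hunit, ?_⟩
  ext i i'
  rw [hent i i']
  rw [Matrix.sum_apply]
  refine Finset.sum_congr rfl fun m _ => ?_
  simp only [Matrix.smul_apply, outer, Matrix.of_apply, smul_eq_mul]
  by_cases hm : p m = 0
  · rw [hSzero m hm i, hm]
    simp
  · rw [hφ]
    simp only [if_neg hm]
    rw [_root_.map_mul, map_inv₀, Complex.conj_ofReal]
    have key : (Complex.ofReal (p m)) * ((Real.sqrt (p m) : ℂ)⁻¹ * (Real.sqrt (p m) : ℂ)⁻¹) = 1 := by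
      rw [← mul_inv, ← Complex.ofReal_mul, Real.mul_self_sqrt (hp0 m),
        mul_inv_cancel₀ (by exact_mod_cast hm)]
    symm
    calc Complex.ofReal (p m) * ((Real.sqrt (p m) : ℂ)⁻¹ * S i m * ((Real.sqrt (p m) : ℂ)⁻¹ * (starRingEnd ℂ) (S i' m)))
        = (Complex.ofReal (p m) * ((Real.sqrt (p m) : ℂ)⁻¹ * (Real.sqrt (p m) : ℂ)⁻¹)) * (S i m * (starRingEnd ℂ) (S i' m)) := by ring
      _ = S i m * (starRingEnd ℂ) (S i' m) := by rw [key, one_mul]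

lemma reduced_posSemidef {ιA ιR : Type} [Fintype ιA] [Fintype ιR] (c : ιA → ιR → ℂ) :
    (Matrix.of fun i i' : ιA => ∑ r, c i r * (starRingEnd ℂ) (c i' r)).PosSemidef := by
  have h : (Matrix.of fun i i' : ιA => ∑ r, c i r * (starRingEnd ℂ) (c i' r))
      = ∑ r : ιR, outer (fun i => c i r) := by
    ext i i'
    simp [outer, Matrix.sum_apply]
  rw [h]
  exact Finset.sum_induction _ Matrix.PosSemidef (fun a b ha hb => ha.add hb)
    (Matrix.PosSemidef.zero) (fun r _ => outer_posSemidef _)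

lemma pure_reduced {ιA ιR : Type} [Fintype ιA] [Fintype ιR] [DecidableEq ιA]
    (c : ιA → ιR → ℂ) :
    ∃ α : ιA → ιA → ℂ, (∀ i, IsUnitVec (α i)) ∧
      (Matrix.of fun i i' : ιA => ∑ r, c i r * (starRingEnd ℂ) (c i' r))
        = ∑ i, Complex.ofReal (∑ r, ‖c i r‖ ^ 2) • outer (α i) := by
  obtain ⟨p, α, hp0, hpd, hunit, hdec⟩ := ensemble_exists (reduced_posSemidef c)
  have hpe : ∀ i, p i = ∑ r, ‖c i r‖ ^ 2 := by
    intro i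
    have h1 := hpd i
    have h2 : (Matrix.of fun i i' : ιA => ∑ r, c i r * (starRingEnd ℂ) (c i' r)) i i
        = Complex.ofReal (∑ r, ‖c i r‖ ^ 2) := by
      push_cast
      simp [Complex.mul_conj']
    rw [h2] at h1
    exact_mod_cast h1.symm
  refine ⟨α, hunit, ?_⟩
  rw [hdec]
  exact Finset.sum_congr rfl fun i _ => by rw [hpe i]

def ensSet (f : (ι : Type) → [Fintype ι] → (ι → ℝ) → ℝ)
    {ι : Type} [Fintype ι] (ρ : Matrix ι ι ℂ) : Set ℝ :=
  { x : ℝ | ∃ (K : ℕ) (p : Fin K → ℝ) (φ : Fin K → ι → ℂ),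
    (∀ k, 0 ≤ p k) ∧ (∑ k, p k) = 1 ∧ (∀ k, IsUnitVec (φ k)) ∧
    ρ = ∑ k, Complex.ofReal (p k) • outer (φ k) ∧
    x = ∑ k, p k * pureCoh f (φ k) }


lemma mixedCoh_eq (f : (ι : Type) → [Fintype ι] → (ι → ℝ) → ℝ)
    {ι : Type} [Fintype ι] (ρ : Matrix ι ι ℂ) : mixedCoh f ρ = sInf (ensSet f ρ) := rfl

lemma pureCoh_nonneg (f : (ι : Type) → [Fintype ι] → (ι → ℝ) → ℝ)
    (hf : ∀ (ι : Type) [Fintype ι] (v : ι → ℝ), (∀ i, 0 ≤ v i) → 0 ≤ f ι v)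
    {ι : Type} [Fintype ι] (φ : ι → ℂ) : 0 ≤ pureCoh f φ :=
  hf ι _ fun i => sq_nonneg _

lemma ensSet_bddBelow (f : (ι : Type) → [Fintype ι] → (ι → ℝ) → ℝ)
    (hf : ∀ (ι : Type) [Fintype ι] (v : ι → ℝ), (∀ i, 0 ≤ v i) → 0 ≤ f ι v)
    {ι : Type} [Fintype ι] (ρ : Matrix ι ι ℂ) : BddBelow (ensSet f ρ) := by
  refine ⟨0, ?_⟩
  rintro x ⟨K, p, φ, hp0, -, -, -, rfl⟩
  exact Finset.sum_nonneg fun k _ => mul_nonneg (hp0 k) (pureCoh_nonneg f hf _)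

lemma mem_ensSet (f : (ι : Type) → [Fintype ι] → (ι → ℝ) → ℝ)
    {ι : Type} [Fintype ι] {J : Type} [Fintype J] (ρ : Matrix ι ι ℂ)
    (p : J → ℝ) (φ : J → ι → ℂ)
    (h0 : ∀ j, 0 ≤ p j) (h1 : ∑ j, p j = 1) (hu : ∀ j, IsUnitVec (φ j))
    (hd : ρ = ∑ j, Complex.ofReal (p j) • outer (φ j)) :
    (∑ j, p j * pureCoh f (φ j)) ∈ ensSet f ρ := by
  set e := Fintype.equivFin J with he
  refine ⟨Fintype.card J, fun k => p (e.symm k), fun k => φ (e.symm k),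
    fun k => h0 _, ?_, fun k => hu _, ?_, ?_⟩
  · rw [Equiv.sum_comp e.symm p, h1]
  · rw [hd, ← Equiv.sum_comp e.symm (fun j => Complex.ofReal (p j) • outer (φ j))]
  · rw [Equiv.sum_comp e.symm (fun j => p j * pureCoh f (φ j))]

lemma mixedCoh_le_ensemble (f : (ι : Type) → [Fintype ι] → (ι → ℝ) → ℝ)
    (hf : ∀ (ι : Type) [Fintype ι] (v : ι → ℝ), (∀ i, 0 ≤ v i) → 0 ≤ f ι v)
    {ι : Type} [Fintype ι] {J : Type} [Fintype J] (ρ : Matrix ι ι ℂ)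
    (p : J → ℝ) (φ : J → ι → ℂ)
    (h0 : ∀ j, 0 ≤ p j) (h1 : ∑ j, p j = 1) (hu : ∀ j, IsUnitVec (φ j))
    (hd : ρ = ∑ j, Complex.ofReal (p j) • outer (φ j)) :
    mixedCoh f ρ ≤ ∑ j, p j * pureCoh f (φ j) := by
  rw [mixedCoh_eq]
  exact csInf_le (ensSet_bddBelow f hf ρ) (mem_ensSet f ρ p φ h0 h1 hu hd)

lemma ite_mul_of_nonneg {s t : ℝ} (hs : 0 ≤ s) :
    (if 0 < s then s * t else 0) = s * t := by
  rcases eq_or_lt_of_le hs with h | h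
  · rw [if_neg (by rw [← h]; exact lt_irrefl 0), ← h, zero_mul]
  · rw [if_pos h]

lemma sum_rotate {A B C : Type} [Fintype A] [Fintype B] [Fintype C] {M : Type}
    [AddCommMonoid M] (F : A → B → C → M) :
    ∑ a, ∑ b, ∑ c, F a b c = ∑ c, ∑ a, ∑ b, F a b c :=
  calc ∑ a, ∑ b, ∑ c, F a b c
      = ∑ a, ∑ c, ∑ b, F a b c :=
        Finset.sum_congr rfl fun a _ => Finset.sum_comm
    _ = ∑ c, ∑ a, ∑ b, F a b c := Finset.sum_comm


/-- if for every tripartite pure state `|φ⟩_ABC = Σ_{ijk} c_{ijk}|i⟩|j⟩|k⟩`,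
with unit vectors `|α_i⟩, |β_j⟩, |γ_k⟩` realizing the decompositions
`ρ_A = Σ_i p_i |α_i⟩⟨α_i|`, `ρ_B = Σ_j q_j |β_j⟩⟨β_j|`, `ρ_C = Σ_k r_k |γ_k⟩⟨γ_k|` of the
reduced states of `|φ⟩⟨φ|`, one has
`C_f(|φ⟩_ABC) ≥ Σ_{i:p_i>0} p_i C_f(α_i) + Σ_{j:q_j>0} q_j C_f(β_j) + Σ_{k:r_k>0} r_k C_f(γ_k)`,
then `C_f` is superadditive on tripartite density matrices. -/
theorem superadditivity_of_pure_condition_tripartite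
    (f : (ι : Type) → [Fintype ι] → (ι → ℝ) → ℝ)
    (hf : ∀ (ι : Type) [Fintype ι] (v : ι → ℝ), (∀ i, 0 ≤ v i) → 0 ≤ f ι v)
    (hyp : ∀ (dA dB dC : ℕ) (c : Fin dA → Fin dB → Fin dC → ℂ),
      (∑ i, ∑ j, ∑ k, ‖c i j k‖ ^ 2) = 1 →
      ∀ (α : Fin dA → Fin dA → ℂ) (β : Fin dB → Fin dB → ℂ) (γ : Fin dC → Fin dC → ℂ),
        (∀ i, IsUnitVec (α i)) → (∀ j, IsUnitVec (β j)) → (∀ k, IsUnitVec (γ k)) →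
        (Matrix.of (fun i i' : Fin dA => ∑ j, ∑ k, c i j k * (starRingEnd ℂ) (c i' j k))
          = ∑ i, Complex.ofReal (∑ j, ∑ k, ‖c i j k‖ ^ 2) • outer (α i)) →
        (Matrix.of (fun j j' : Fin dB => ∑ i, ∑ k, c i j k * (starRingEnd ℂ) (c i j' k))
          = ∑ j, Complex.ofReal (∑ i, ∑ k, ‖c i j k‖ ^ 2) • outer (β j)) →
        (Matrix.of (fun k k' : Fin dC => ∑ i, ∑ j, c i j k * (starRingEnd ℂ) (c i j k'))
          = ∑ k, Complex.ofReal (∑ i, ∑ j, ‖c i j k‖ ^ 2) • outer (γ k)) →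
        pureCoh f (fun t : Fin dA × Fin dB × Fin dC => c t.1 t.2.1 t.2.2) ≥
          (∑ i : Fin dA, (if 0 < (∑ j, ∑ k, ‖c i j k‖ ^ 2) then
              (∑ j, ∑ k, ‖c i j k‖ ^ 2) * pureCoh f (α i) else 0))
          + (∑ j : Fin dB, (if 0 < (∑ i, ∑ k, ‖c i j k‖ ^ 2) then
              (∑ i, ∑ k, ‖c i j k‖ ^ 2) * pureCoh f (β j) else 0))
          + (∑ k : Fin dC, (if 0 < (∑ i, ∑ j, ‖c i j k‖ ^ 2) then
              (∑ i, ∑ j, ‖c i j k‖ ^ 2) * pureCoh f (γ k) else 0))) :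
    ∀ (dA dB dC : ℕ) (ρ : Matrix (Fin dA × Fin dB × Fin dC) (Fin dA × Fin dB × Fin dC) ℂ),
      IsDensity ρ →
      mixedCoh f ρ ≥
        mixedCoh f (Matrix.of fun i i' : Fin dA => ∑ j, ∑ k, ρ (i, j, k) (i', j, k))
        + mixedCoh f (Matrix.of fun j j' : Fin dB => ∑ i, ∑ k, ρ (i, j, k) (i, j', k))
        + mixedCoh f (Matrix.of fun k k' : Fin dC => ∑ i, ∑ j, ρ (i, j, k) (i, j, k')) := by
  intro dA dB dC ρ hρ
  obtain ⟨hPSD, htr⟩ := hρ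
  -- nonemptiness of the ensemble set of ρ
  obtain ⟨p0, φ0, hp00, hpd0, hu0, hd0⟩ := ensemble_exists hPSD
  have hsum0 : ∑ m, p0 m = 1 := by
    have h1 : ρ.trace = Complex.ofReal (∑ m, p0 m) := by
      rw [Matrix.trace]
      push_cast
      exact Finset.sum_congr rfl fun m _ => hpd0 m
    rw [htr] at h1
    exact_mod_cast h1.symm
  have hne : (ensSet f ρ).Nonempty :=
    ⟨_, mem_ensSet f ρ p0 φ0 hp00 hsum0 hu0 hd0⟩
  rw [ge_iff_le, mixedCoh_eq f ρ]
  apply le_csInf hne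
  rintro x ⟨K, p, φ, hp0, hp1, hu, hd, rfl⟩
  -- weights of the reduced ensembles
  set pA : Fin K → Fin dA → ℝ := fun k i => ∑ j, ∑ l, ‖φ k (i, j, l)‖ ^ 2 with hpA
  set pB : Fin K → Fin dB → ℝ := fun k j => ∑ i, ∑ l, ‖φ k (i, j, l)‖ ^ 2 with hpB
  set pC : Fin K → Fin dC → ℝ := fun k l => ∑ i, ∑ j, ‖φ k (i, j, l)‖ ^ 2 with hpC
  have hpA0 : ∀ k i, 0 ≤ pA k i := fun k i =>
    Finset.sum_nonneg fun _ _ => Finset.sum_nonneg fun _ _ => sq_nonneg _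
  have hpB0 : ∀ k j, 0 ≤ pB k j := fun k j =>
    Finset.sum_nonneg fun _ _ => Finset.sum_nonneg fun _ _ => sq_nonneg _
  have hpC0 : ∀ k l, 0 ≤ pC k l := fun k l =>
    Finset.sum_nonneg fun _ _ => Finset.sum_nonneg fun _ _ => sq_nonneg _
  have hnorm : ∀ k, ∑ i, ∑ j, ∑ l, ‖φ k (i, j, l)‖ ^ 2 = 1 := by
    intro k
    have h1 := hu k
    rw [IsUnitVec, Fintype.sum_prod_type] at h1
    rw [← h1]
    exact Finset.sum_congr rfl fun i _ =>
      (Fintype.sum_prod_type (f := fun r : Fin dB × Fin dC => ‖φ k (i, r.1, r.2)‖ ^ 2)).symm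
  -- reduced-state decompositions for each pure state of the ensemble
  have HA : ∀ k, ∃ α : Fin dA → Fin dA → ℂ, (∀ i, IsUnitVec (α i)) ∧
      (Matrix.of fun i i' : Fin dA =>
          ∑ j, ∑ l, φ k (i, j, l) * (starRingEnd ℂ) (φ k (i', j, l)))
        = ∑ i, Complex.ofReal (pA k i) • outer (α i) := by
    intro k
    obtain ⟨α, h1, h2⟩ :=
      pure_reduced (fun (i : Fin dA) (r : Fin dB × Fin dC) => φ k (i, r.1, r.2))
    refine ⟨α, h1, ?_⟩
    have e1 : (Matrix.of fun i i' : Fin dA =>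
        ∑ j, ∑ l, φ k (i, j, l) * (starRingEnd ℂ) (φ k (i', j, l)))
        = Matrix.of fun i i' : Fin dA => ∑ r : Fin dB × Fin dC,
            φ k (i, r.1, r.2) * (starRingEnd ℂ) (φ k (i', r.1, r.2)) := by
      ext i i'
      exact (Fintype.sum_prod_type (f := fun r : Fin dB × Fin dC =>
        φ k (i, r.1, r.2) * (starRingEnd ℂ) (φ k (i', r.1, r.2)))).symm
    rw [e1, h2]
    refine Finset.sum_congr rfl fun i _ => ?_
    have h3 : (∑ r : Fin dB × Fin dC, ‖φ k (i, r.1, r.2)‖ ^ 2) = pA k i :=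
      Fintype.sum_prod_type (f := fun r : Fin dB × Fin dC => ‖φ k (i, r.1, r.2)‖ ^ 2)
    rw [h3]
  have HB : ∀ k, ∃ β : Fin dB → Fin dB → ℂ, (∀ j, IsUnitVec (β j)) ∧
      (Matrix.of fun j j' : Fin dB =>
          ∑ i, ∑ l, φ k (i, j, l) * (starRingEnd ℂ) (φ k (i, j', l)))
        = ∑ j, Complex.ofReal (pB k j) • outer (β j) := by
    intro k
    obtain ⟨β, h1, h2⟩ :=
      pure_reduced (fun (j : Fin dB) (r : Fin dA × Fin dC) => φ k (r.1, j, r.2))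
    refine ⟨β, h1, ?_⟩
    have e1 : (Matrix.of fun j j' : Fin dB =>
        ∑ i, ∑ l, φ k (i, j, l) * (starRingEnd ℂ) (φ k (i, j', l)))
        = Matrix.of fun j j' : Fin dB => ∑ r : Fin dA × Fin dC,
            φ k (r.1, j, r.2) * (starRingEnd ℂ) (φ k (r.1, j', r.2)) := by
      ext j j'
      exact (Fintype.sum_prod_type (f := fun r : Fin dA × Fin dC =>
        φ k (r.1, j, r.2) * (starRingEnd ℂ) (φ k (r.1, j', r.2)))).symm
    rw [e1, h2]
    refine Finset.sum_congr rfl fun j _ => ?_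
    have h3 : (∑ r : Fin dA × Fin dC, ‖φ k (r.1, j, r.2)‖ ^ 2) = pB k j :=
      Fintype.sum_prod_type (f := fun r : Fin dA × Fin dC => ‖φ k (r.1, j, r.2)‖ ^ 2)
    rw [h3]
  have HC : ∀ k, ∃ γ : Fin dC → Fin dC → ℂ, (∀ l, IsUnitVec (γ l)) ∧
      (Matrix.of fun l l' : Fin dC =>
          ∑ i, ∑ j, φ k (i, j, l) * (starRingEnd ℂ) (φ k (i, j, l')))
        = ∑ l, Complex.ofReal (pC k l) • outer (γ l) := by
    intro k
    obtain ⟨γ, h1, h2⟩ :=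
      pure_reduced (fun (l : Fin dC) (r : Fin dA × Fin dB) => φ k (r.1, r.2, l))
    refine ⟨γ, h1, ?_⟩
    have e1 : (Matrix.of fun l l' : Fin dC =>
        ∑ i, ∑ j, φ k (i, j, l) * (starRingEnd ℂ) (φ k (i, j, l')))
        = Matrix.of fun l l' : Fin dC => ∑ r : Fin dA × Fin dB,
            φ k (r.1, r.2, l) * (starRingEnd ℂ) (φ k (r.1, r.2, l')) := by
      ext l l'
      exact (Fintype.sum_prod_type (f := fun r : Fin dA × Fin dB =>
        φ k (r.1, r.2, l) * (starRingEnd ℂ) (φ k (r.1, r.2, l')))).symm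
    rw [e1, h2]
    refine Finset.sum_congr rfl fun l _ => ?_
    have h3 : (∑ r : Fin dA × Fin dB, ‖φ k (r.1, r.2, l)‖ ^ 2) = pC k l :=
      Fintype.sum_prod_type (f := fun r : Fin dA × Fin dB => ‖φ k (r.1, r.2, l)‖ ^ 2)
    rw [h3]
  choose α hαu hαd using HA
  choose β hβu hβd using HB
  choose γ hγu hγd using HC
  -- the per-pure-state inequality from `hyp`
  have hineq : ∀ k, pureCoh f (φ k) ≥
      (∑ i, pA k i * pureCoh f (α k i)) + (∑ j, pB k j * pureCoh f (β k j))
        + (∑ l, pC k l * pureCoh f (γ k l)) := by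
    intro k
    have h := hyp dA dB dC (fun i j l => φ k (i, j, l)) (hnorm k) (α k) (β k) (γ k)
      (hαu k) (hβu k) (hγu k) (hαd k) (hβd k) (hγd k)
    have hpure : (fun t : Fin dA × Fin dB × Fin dC => φ k (t.1, t.2.1, t.2.2)) = φ k := by
      funext t
      rfl
    rw [hpure] at h
    calc pureCoh f (φ k) ≥ _ := h
      _ = (∑ i, pA k i * pureCoh f (α k i)) + (∑ j, pB k j * pureCoh f (β k j))
            + (∑ l, pC k l * pureCoh f (γ k l)) := by
        congr 1
        · congr 1
          · exact Finset.sum_congr rfl fun i _ => ite_mul_of_nonneg (hpA0 k i)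
          · exact Finset.sum_congr rfl fun j _ => ite_mul_of_nonneg (hpB0 k j)
        · exact Finset.sum_congr rfl fun l _ => ite_mul_of_nonneg (hpC0 k l)
  -- sums of the reduced weights
  have hApA : ∀ k, ∑ i, pA k i = 1 := fun k => hnorm k
  have hBpB : ∀ k, ∑ j, pB k j = 1 := by
    intro k
    rw [← hnorm k]
    exact Finset.sum_comm
  have hCpC : ∀ k, ∑ l, pC k l = 1 := by
    intro k
    rw [← hnorm k]
    exact (sum_rotate fun i j l => ‖φ k (i, j, l)‖ ^ 2).symm
  -- decompositions of the reduced density matrices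
  have hρA : (Matrix.of fun i i' : Fin dA => ∑ j, ∑ l, ρ (i, j, l) (i', j, l))
      = ∑ t : Fin K × Fin dA, Complex.ofReal (p t.1 * pA t.1 t.2) • outer (α t.1 t.2) := by
    have step : (Matrix.of fun i i' : Fin dA => ∑ j, ∑ l, ρ (i, j, l) (i', j, l))
        = ∑ k, Complex.ofReal (p k) • (Matrix.of fun i i' : Fin dA =>
            ∑ j, ∑ l, φ k (i, j, l) * (starRingEnd ℂ) (φ k (i', j, l))) := by
      ext i i'
      rw [Matrix.sum_apply]
      simp only [Matrix.of_apply, Matrix.smul_apply, smul_eq_mul, hd, Matrix.sum_apply,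
        outer, Finset.mul_sum]
      exact sum_rotate fun j l k =>
        Complex.ofReal (p k) * (φ k (i, j, l) * (starRingEnd ℂ) (φ k (i', j, l)))
    have step2 : (Matrix.of fun i i' : Fin dA => ∑ j, ∑ l, ρ (i, j, l) (i', j, l))
        = ∑ k, ∑ i, Complex.ofReal (p k * pA k i) • outer (α k i) := by
      rw [step]
      refine Finset.sum_congr rfl fun k _ => ?_
      rw [hαd k, Finset.smul_sum]
      refine Finset.sum_congr rfl fun i _ => ?_
      rw [smul_smul, ← Complex.ofReal_mul]
    exact step2.trans (Fintype.sum_prod_type (f := fun t : Fin K × Fin dA =>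
      Complex.ofReal (p t.1 * pA t.1 t.2) • outer (α t.1 t.2))).symm
  have hρB : (Matrix.of fun j j' : Fin dB => ∑ i, ∑ l, ρ (i, j, l) (i, j', l))
      = ∑ t : Fin K × Fin dB, Complex.ofReal (p t.1 * pB t.1 t.2) • outer (β t.1 t.2) := by
    have step : (Matrix.of fun j j' : Fin dB => ∑ i, ∑ l, ρ (i, j, l) (i, j', l))
        = ∑ k, Complex.ofReal (p k) • (Matrix.of fun j j' : Fin dB =>
            ∑ i, ∑ l, φ k (i, j, l) * (starRingEnd ℂ) (φ k (i, j', l))) := by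
      ext j j'
      rw [Matrix.sum_apply]
      simp only [Matrix.of_apply, Matrix.smul_apply, smul_eq_mul, hd, Matrix.sum_apply,
        outer, Finset.mul_sum]
      exact sum_rotate fun i l k =>
        Complex.ofReal (p k) * (φ k (i, j, l) * (starRingEnd ℂ) (φ k (i, j', l)))
    have step2 : (Matrix.of fun j j' : Fin dB => ∑ i, ∑ l, ρ (i, j, l) (i, j', l))
        = ∑ k, ∑ j, Complex.ofReal (p k * pB k j) • outer (β k j) := by
      rw [step]
      refine Finset.sum_congr rfl fun k _ => ?_
      rw [hβd k, Finset.smul_sum]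
      refine Finset.sum_congr rfl fun j _ => ?_
      rw [smul_smul, ← Complex.ofReal_mul]
    exact step2.trans (Fintype.sum_prod_type (f := fun t : Fin K × Fin dB =>
      Complex.ofReal (p t.1 * pB t.1 t.2) • outer (β t.1 t.2))).symm
  have hρC : (Matrix.of fun l l' : Fin dC => ∑ i, ∑ j, ρ (i, j, l) (i, j, l'))
      = ∑ t : Fin K × Fin dC, Complex.ofReal (p t.1 * pC t.1 t.2) • outer (γ t.1 t.2) := by
    have step : (Matrix.of fun l l' : Fin dC => ∑ i, ∑ j, ρ (i, j, l) (i, j, l'))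
        = ∑ k, Complex.ofReal (p k) • (Matrix.of fun l l' : Fin dC =>
            ∑ i, ∑ j, φ k (i, j, l) * (starRingEnd ℂ) (φ k (i, j, l'))) := by
      ext l l'
      rw [Matrix.sum_apply]
      simp only [Matrix.of_apply, Matrix.smul_apply, smul_eq_mul, hd, Matrix.sum_apply,
        outer, Finset.mul_sum]
      exact sum_rotate fun i j k =>
        Complex.ofReal (p k) * (φ k (i, j, l) * (starRingEnd ℂ) (φ k (i, j, l')))
    have step2 : (Matrix.of fun l l' : Fin dC => ∑ i, ∑ j, ρ (i, j, l) (i, j, l'))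
        = ∑ k, ∑ l, Complex.ofReal (p k * pC k l) • outer (γ k l) := by
      rw [step]
      refine Finset.sum_congr rfl fun k _ => ?_
      rw [hγd k, Finset.smul_sum]
      refine Finset.sum_congr rfl fun l _ => ?_
      rw [smul_smul, ← Complex.ofReal_mul]
    exact step2.trans (Fintype.sum_prod_type (f := fun t : Fin K × Fin dC =>
      Complex.ofReal (p t.1 * pC t.1 t.2) • outer (γ t.1 t.2))).symm
  -- bound each reduced mixed coherence by the induced ensemble average
  have hsumA : ∑ t : Fin K × Fin dA, p t.1 * pA t.1 t.2 = 1 := by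
    rw [Fintype.sum_prod_type (f := fun t : Fin K × Fin dA => p t.1 * pA t.1 t.2)]
    rw [← hp1]
    refine Finset.sum_congr rfl fun k _ => ?_
    show (∑ i, p k * pA k i) = p k
    rw [← Finset.mul_sum, hApA k, mul_one]
  have hsumB : ∑ t : Fin K × Fin dB, p t.1 * pB t.1 t.2 = 1 := by
    rw [Fintype.sum_prod_type (f := fun t : Fin K × Fin dB => p t.1 * pB t.1 t.2)]
    rw [← hp1]
    refine Finset.sum_congr rfl fun k _ => ?_
    show (∑ j, p k * pB k j) = p k
    rw [← Finset.mul_sum, hBpB k, mul_one]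
  have hsumC : ∑ t : Fin K × Fin dC, p t.1 * pC t.1 t.2 = 1 := by
    rw [Fintype.sum_prod_type (f := fun t : Fin K × Fin dC => p t.1 * pC t.1 t.2)]
    rw [← hp1]
    refine Finset.sum_congr rfl fun k _ => ?_
    show (∑ l, p k * pC k l) = p k
    rw [← Finset.mul_sum, hCpC k, mul_one]
  have hA : mixedCoh f (Matrix.of fun i i' : Fin dA => ∑ j, ∑ l, ρ (i, j, l) (i', j, l))
      ≤ ∑ k, p k * (∑ i, pA k i * pureCoh f (α k i)) := by
    have h := mixedCoh_le_ensemble f hf _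
      (fun t : Fin K × Fin dA => p t.1 * pA t.1 t.2) (fun t => α t.1 t.2)
      (fun t => mul_nonneg (hp0 t.1) (hpA0 t.1 t.2)) hsumA (fun t => hαu t.1 t.2) hρA
    refine h.trans (le_of_eq ?_)
    rw [Fintype.sum_prod_type (f := fun t : Fin K × Fin dA =>
      (p t.1 * pA t.1 t.2) * pureCoh f (α t.1 t.2))]
    refine Finset.sum_congr rfl fun k _ => ?_
    show (∑ i, (p k * pA k i) * pureCoh f (α k i))
      = p k * ∑ i, pA k i * pureCoh f (α k i)
    rw [Finset.mul_sum]
    exact Finset.sum_congr rfl fun i _ => (mul_assoc _ _ _)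
  have hB : mixedCoh f (Matrix.of fun j j' : Fin dB => ∑ i, ∑ l, ρ (i, j, l) (i, j', l))
      ≤ ∑ k, p k * (∑ j, pB k j * pureCoh f (β k j)) := by
    have h := mixedCoh_le_ensemble f hf _
      (fun t : Fin K × Fin dB => p t.1 * pB t.1 t.2) (fun t => β t.1 t.2)
      (fun t => mul_nonneg (hp0 t.1) (hpB0 t.1 t.2)) hsumB (fun t => hβu t.1 t.2) hρB
    refine h.trans (le_of_eq ?_)
    rw [Fintype.sum_prod_type (f := fun t : Fin K × Fin dB =>
      (p t.1 * pB t.1 t.2) * pureCoh f (β t.1 t.2))]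
    refine Finset.sum_congr rfl fun k _ => ?_
    show (∑ j, (p k * pB k j) * pureCoh f (β k j))
      = p k * ∑ j, pB k j * pureCoh f (β k j)
    rw [Finset.mul_sum]
    exact Finset.sum_congr rfl fun j _ => (mul_assoc _ _ _)
  have hC : mixedCoh f (Matrix.of fun l l' : Fin dC => ∑ i, ∑ j, ρ (i, j, l) (i, j, l'))
      ≤ ∑ k, p k * (∑ l, pC k l * pureCoh f (γ k l)) := by
    have h := mixedCoh_le_ensemble f hf _
      (fun t : Fin K × Fin dC => p t.1 * pC t.1 t.2) (fun t => γ t.1 t.2)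
      (fun t => mul_nonneg (hp0 t.1) (hpC0 t.1 t.2)) hsumC (fun t => hγu t.1 t.2) hρC
    refine h.trans (le_of_eq ?_)
    rw [Fintype.sum_prod_type (f := fun t : Fin K × Fin dC =>
      (p t.1 * pC t.1 t.2) * pureCoh f (γ t.1 t.2))]
    refine Finset.sum_congr rfl fun k _ => ?_
    show (∑ l, (p k * pC k l) * pureCoh f (γ k l))
      = p k * ∑ l, pC k l * pureCoh f (γ k l)
    rw [Finset.mul_sum]
    exact Finset.sum_congr rfl fun l _ => (mul_assoc _ _ _)
  calc mixedCoh f (Matrix.of fun i i' : Fin dA => ∑ j, ∑ l, ρ (i, j, l) (i', j, l))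
        + mixedCoh f (Matrix.of fun j j' : Fin dB => ∑ i, ∑ l, ρ (i, j, l) (i, j', l))
        + mixedCoh f (Matrix.of fun l l' : Fin dC => ∑ i, ∑ j, ρ (i, j, l) (i, j, l'))
      ≤ (∑ k, p k * (∑ i, pA k i * pureCoh f (α k i)))
        + (∑ k, p k * (∑ j, pB k j * pureCoh f (β k j)))
        + (∑ k, p k * (∑ l, pC k l * pureCoh f (γ k l))) :=
        add_le_add (add_le_add hA hB) hC
    _ = ∑ k, p k * ((∑ i, pA k i * pureCoh f (α k i)) + (∑ j, pB k j * pureCoh f (β k j))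
          + (∑ l, pC k l * pureCoh f (γ k l))) := by
        rw [← Finset.sum_add_distrib, ← Finset.sum_add_distrib]
        refine Finset.sum_congr rfl fun k _ => ?_
        ring
    _ ≤ ∑ k, p k * pureCoh f (φ k) :=
        Finset.sum_le_sum fun k _ => mul_le_mul_of_nonneg_left (hineq k) (hp0 k)

end
end

section
/- Let f be a family of functions assigning a nonnegative real number f(v) to each finitely-indexed family v of nonnegative reals, and let C_f be the associated convex roof coherence measure. Suppose that for every n-partite pure state |α⟩ = Σ_{i₁,…,iₙ} c_{i₁…iₙ} |i₁⟩_{A₁}⋯|iₙ⟩_{Aₙ} with Σ |c_{i₁…iₙ}|² = 1, one has C_f(|α⟩) ≥ Σ_{j=1}^{n} Σ_{i_j : p^{(j)}_{i_j} > 0} p^{(j)}_{i_j} C_f(|α^{(j)}_{i_j}⟩), where p^{(j)}_{i_j} = Σ over all other indices of |c_{i₁…iₙ}|² and the unit vectors |α^{(j)}_{i_j}⟩ realize the decompositions ρ_{A_j} = Σ_{i_j} p^{(j)}_{i_j} |α^{(j)}_{i_j}⟩⟨α^{(j)}_{i_j}| of the reduced states of |α⟩⟨α|. Then C_f is superadditive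 for n-partite states: for every n-partite density matrix ρ_{A₁…Aₙ}, C_f(ρ_{A₁…Aₙ}) ≥ Σ_{j=1}^{n} C_f(ρ_{A_j}), where ρ_{A_j} is the reduced density matrix on party j. -/
noncomputable section

open scoped ComplexOrder

/-- every density matrix admits a pure-state ensemble (spectral decomposition). -/
lemma exists_ensemble {ι : Type} [Fintype ι] [DecidableEq ι] (ρ : Matrix ι ι ℂ)
    (hρ : IsDensity ρ) :
    ∃ (K : ℕ) (p : Fin K → ℝ) (φ : Fin K → ι → ℂ),
      (∀ k, 0 ≤ p k) ∧ (∑ k, p k) = 1 ∧ (∀ k, IsUnitVec (φ k)) ∧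
      ρ = ∑ k, Complex.ofReal (p k) • outer (φ k) := by
  obtain ⟨hpsd, htr⟩ := hρ
  have hherm : ρ.IsHermitian := hpsd.1
  set U : Matrix ι ι ℂ := (hherm.eigenvectorUnitary : Matrix ι ι ℂ) with hU
  have hsU : star U * U = 1 := Unitary.coe_star_mul_self _
  let e := Fintype.equivFin ι
  refine ⟨Fintype.card ι, fun k => hherm.eigenvalues (e.symm k),
    fun k x => U x (e.symm k), fun k => hpsd.eigenvalues_nonneg _, ?_, ?_, ?_⟩
  · -- sum of eigenvalues is one
    have h1 : ∑ k : Fin (Fintype.card ι), hherm.eigenvalues (e.symm k)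
        = ∑ i : ι, hherm.eigenvalues i := Equiv.sum_comp e.symm _
    rw [h1]
    have h2 : (↑(∑ i : ι, hherm.eigenvalues i) : ℂ) = 1 := by
      rw [hherm.spectral_theorem, Unitary.conjStarAlgAut_apply] at htr
      rw [Matrix.trace_mul_cycle, hsU, Matrix.one_mul, Matrix.trace_diagonal] at htr
      rw [← htr]
      push_cast
      rfl
    exact_mod_cast h2
  · -- columns of a unitary are unit vectors
    intro k
    have h1 : (star U * U) (e.symm k) (e.symm k) = 1 := by rw [hsU]; simp
    rw [Matrix.mul_apply] at h1
    have h2 : (↑(∑ x : ι, ‖U x (e.symm k)‖ ^ 2) : ℂ) = 1 := by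
      rw [← h1]
      push_cast
      refine Finset.sum_congr rfl fun x _ => ?_
      rw [Matrix.star_apply, ← Complex.mul_conj', Complex.star_def, mul_comm]
    exact_mod_cast h2
  · -- spectral decomposition entrywise
    ext x y
    have hs := hherm.spectral_theorem
    rw [Matrix.sum_apply]
    have h1 : ∑ k : Fin (Fintype.card ι),
        (Complex.ofReal (hherm.eigenvalues (e.symm k)) • outer fun x => U x (e.symm k)) x y
        = ∑ i : ι, (Complex.ofReal (hherm.eigenvalues i) • outer fun x => U x i) x y :=
      Fintype.sum_equiv e.symm _ _ (fun k => rfl)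
    rw [h1]
    conv_lhs => rw [hs, Unitary.conjStarAlgAut_apply]
    rw [Matrix.mul_apply]
    refine Finset.sum_congr rfl fun i _ => ?_
    rw [Matrix.mul_apply, Finset.sum_eq_single i (by
        intro b _ hb
        simp [Matrix.diagonal_apply_ne _ hb]) (by simp)]
    simp only [Matrix.diagonal_apply_eq, Matrix.smul_apply, outer, Matrix.of_apply,
      Matrix.star_apply, smul_eq_mul, Function.comp]
    ring_nf
    rw [hU, Complex.star_def]
    exact congrArg (· * _) (mul_comm (G := ℂ) _ _)

/-- decomposition of the reduced state of a pure state into `d_j` pure states with the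
marginal probabilities as weights. -/
lemma exists_alpha {n : ℕ} {d : Fin n → ℕ} (c : (∀ j, Fin (d j)) → ℂ) (j : Fin n) :
    ∃ α : Fin (d j) → (Fin (d j) → ℂ),
      (∀ i, IsUnitVec (α i)) ∧
      Matrix.of (fun i i' : Fin (d j) =>
          ∑ x : (∀ k, Fin (d k)),
            if x j = i then c x * (starRingEnd ℂ) (c (Function.update x j i')) else 0)
        = ∑ i : Fin (d j),
            Complex.ofReal (∑ x : (∀ k, Fin (d k)), if x j = i then ‖c x‖ ^ 2 else 0)
              • outer (α i) := by
  classical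
  rcases Nat.eq_zero_or_pos (d j) with hd | hd
  · haveI : IsEmpty (Fin (d j)) := by rw [hd]; infer_instance
    refine ⟨fun i => isEmptyElim i, fun i => isEmptyElim i, ?_⟩
    ext i i'
    exact isEmptyElim i
  · set σ : Matrix (Fin (d j)) (Fin (d j)) ℂ := Matrix.of (fun i i' : Fin (d j) =>
      ∑ x : ((k : Fin n) → Fin (d k)), if x j = i then c x * (starRingEnd ℂ) (c (Function.update x j i')) else 0)
      with hσdef
    set i₀ : Fin (d j) := ⟨0, hd⟩
    set M : Matrix (Fin (d j)) ((k : Fin n) → Fin (d k)) ℂ :=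
      Matrix.of (fun i x => if x j = i₀ then c (Function.update x j i) else 0) with hM
    -- σ = M * Mᴴ
    have hσM : σ = M * M.conjTranspose := by
      ext i i'
      rw [Matrix.mul_apply]
      have hkey : ∀ x : ((k : Fin n) → Fin (d k)), M i x * M.conjTranspose x i'
          = if x j = i₀ then
              c (Function.update x j i) * (starRingEnd ℂ) (c (Function.update x j i'))
            else 0 := by
        intro x
        by_cases h : x j = i₀ <;>
          simp [hM, Matrix.conjTranspose_apply, h]
      simp only [hkey]
      -- reindex the left sum via the involution swapping coordinate j between i₀ and i
      have hg : Function.Involutive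
          (fun x : ((k : Fin n) → Fin (d k)) => Function.update x j ((Equiv.swap i₀ i) (x j))) := by
        intro x
        simp [Function.update_idem, Function.update_self, Equiv.swap_apply_self,
          Function.update_eq_self]
      set g : Equiv.Perm ((k : Fin n) → Fin (d k)) := Function.Involutive.toPerm _ hg with hgdef
      have hgco : ∀ x : ((k : Fin n) → Fin (d k)), g x = Function.update x j ((Equiv.swap i₀ i) (x j)) :=
        fun x => rfl
      rw [hσdef]
      simp only [Matrix.of_apply]
      rw [← Equiv.sum_comp g (fun x : ((k : Fin n) → Fin (d k)) => if x j = i then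
            c x * (starRingEnd ℂ) (c (Function.update x j i')) else 0)]
      refine Finset.sum_congr rfl fun x _ => ?_
      simp only [hgco]
      have hco : (Function.update x j ((Equiv.swap i₀ i) (x j))) j
          = (Equiv.swap i₀ i) (x j) := Function.update_self _ _ _
      by_cases h : x j = i₀
      · have h1 : (Function.update x j ((Equiv.swap i₀ i) (x j))) j = i := by
          rw [hco, h, Equiv.swap_apply_left]
        have h2 : (Function.update x j ((Equiv.swap i₀ i) (x j)))
            = Function.update x j i := by
          rw [h, Equiv.swap_apply_left]
        rw [if_pos h1, if_pos h, h2, Function.update_idem]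
      · have h1 : (Function.update x j ((Equiv.swap i₀ i) (x j))) j ≠ i := by
          rw [hco]
          intro hcon
          have h2 := congrArg (Equiv.swap i₀ i) hcon
          rw [Equiv.swap_apply_self, Equiv.swap_apply_right] at h2
          exact h h2
        rw [if_neg h1, if_neg h]
    have hσpsd : σ.PosSemidef := hσM ▸ Matrix.posSemidef_self_mul_conjTranspose M
    open scoped MatrixOrder in set B := CFC.sqrt σ with hB
    have hBherm : B.IsHermitian := open scoped MatrixOrder in (Matrix.nonneg_iff_posSemidef.mp (CFC.sqrt_nonneg σ)).1
    have hBB : B * B = σ := open scoped MatrixOrder in CFC.sqrt_mul_sqrt_self σ hσpsd.nonneg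
    set q : Fin (d j) → ℝ := fun m => ∑ x : ((k : Fin n) → Fin (d k)), if x j = m then ‖c x‖ ^ 2 else 0 with hq
    have hq0 : ∀ m, 0 ≤ q m := by
      intro m
      refine Finset.sum_nonneg fun x _ => ?_
      by_cases h : x j = m <;> simp [h] <;> positivity
    -- diagonal of σ is q
    have hqσ : ∀ m, (↑(q m) : ℂ) = σ m m := by
      intro m
      rw [hσdef]
      simp only [Matrix.of_apply, hq]
      rw [Complex.ofReal_sum]
      refine Finset.sum_congr rfl fun x _ => ?_
      by_cases h : x j = m
      · rw [if_pos h, if_pos h, ← h, Function.update_eq_self, Complex.mul_conj']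
        push_cast; ring
      · rw [if_neg h, if_neg h, Complex.ofReal_zero]
    -- column norms of B are q
    have hrq : ∀ m, ∑ i : Fin (d j), ‖B i m‖ ^ 2 = q m := by
      intro m
      have h1 : (↑(∑ i : Fin (d j), ‖B i m‖ ^ 2) : ℂ) = σ m m := by
        rw [← hBB, Matrix.mul_apply]
        push_cast
        refine Finset.sum_congr rfl fun i _ => ?_
        have h2 : B m i = (starRingEnd ℂ) (B i m) := by
          conv_lhs => rw [← hBherm]
          simp [Matrix.conjTranspose_apply]
        rw [h2, ← Complex.mul_conj']
        ring
      have h3 : (↑(∑ i : Fin (d j), ‖B i m‖ ^ 2) : ℂ) = (↑(q m) : ℂ) := by rw [h1, hqσ]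
      exact_mod_cast h3
    set α : Fin (d j) → (Fin (d j) → ℂ) := fun m =>
      if 0 < q m then (fun i => (↑(Real.sqrt (q m)) : ℂ)⁻¹ * B i m) else Pi.single m 1
      with hα
    have hBzero : ∀ m, ¬ 0 < q m → ∀ i, B i m = 0 := by
      intro m hm i
      have hqm : q m = 0 := le_antisymm (not_lt.1 hm) (hq0 m)
      have h1 : ∑ i : Fin (d j), ‖B i m‖ ^ 2 = 0 := by rw [hrq, hqm]
      have h2 := (Finset.sum_eq_zero_iff_of_nonneg
        (fun i _ => by positivity)).1 h1 i (Finset.mem_univ i)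
      have : ‖B i m‖ = 0 := by nlinarith [norm_nonneg (B i m)]
      simpa using this
    have hαpos : ∀ m, 0 < q m → α m = fun i => (↑(Real.sqrt (q m)) : ℂ)⁻¹ * B i m := by
      intro m hm
      simp only [hα]
      rw [if_pos hm]
    have hαneg : ∀ m, ¬ 0 < q m → α m = Pi.single m 1 := by
      intro m hm
      simp only [hα]
      rw [if_neg hm]
    refine ⟨α, ?_, ?_⟩
    · intro m
      show ∑ i, ‖α m i‖ ^ 2 = 1
      by_cases hm : 0 < q m
      · rw [hαpos m hm]
        have hns : ‖(↑(Real.sqrt (q m)) : ℂ)⁻¹‖ = (Real.sqrt (q m))⁻¹ := by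
          rw [norm_inv, Complex.norm_real, Real.norm_eq_abs,
            abs_of_nonneg (Real.sqrt_nonneg _)]
        have : ∑ i : Fin (d j), ‖(↑(Real.sqrt (q m)) : ℂ)⁻¹ * B i m‖ ^ 2
            = ((Real.sqrt (q m))⁻¹) ^ 2 * ∑ i : Fin (d j), ‖B i m‖ ^ 2 := by
          rw [Finset.mul_sum]
          refine Finset.sum_congr rfl fun i _ => ?_
          rw [norm_mul, hns, mul_pow]
        rw [this, hrq, inv_pow, Real.sq_sqrt (hq0 m), inv_mul_cancel₀ (ne_of_gt hm)]
      · rw [hαneg m hm]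
        have : ∀ i : Fin (d j), ‖(Pi.single m 1 : Fin (d j) → ℂ) i‖ ^ 2
            = if i = m then 1 else 0 := by
          intro i
          by_cases h : i = m <;> simp [Pi.single_apply, h]
        simp only [this]
        simp
    · ext i i'
      rw [← hBB, Matrix.sum_apply, Matrix.mul_apply]
      refine Finset.sum_congr rfl fun m _ => ?_
      have hcoef : (∑ x : ((k : Fin n) → Fin (d k)), if x j = m then ‖c x‖ ^ 2 else 0)
          = q m := rfl
      have hBc : B m i' = (starRingEnd ℂ) (B i' m) := by
        conv_lhs => rw [← hBherm]
        simp [Matrix.conjTranspose_apply]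
      rw [hBc, hcoef]
      simp only [Matrix.smul_apply, outer, Matrix.of_apply, smul_eq_mul]
      by_cases hm : 0 < q m
      · rw [hαpos m hm]
        rw [map_mul, map_inv₀, Complex.conj_ofReal]
        have hs : ((Real.sqrt (q m) : ℂ)) * ((Real.sqrt (q m) : ℂ)) = (q m : ℂ) := by
          rw [← Complex.ofReal_mul, Real.mul_self_sqrt (hq0 m)]
        have hne : ((Real.sqrt (q m) : ℂ)) ≠ 0 := by
          simp only [ne_eq, Complex.ofReal_eq_zero]
          exact Real.sqrt_ne_zero'.2 hm
        field_simp
        rw [← hs]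
        ring
      · have hqm : q m = 0 := le_antisymm (not_lt.1 hm) (hq0 m)
        rw [hBzero m hm i, zero_mul, hqm]
        simp

/-- if for every n-partite pure state `|α⟩ = Σ c_{i₁…iₙ} |i₁⟩⋯|iₙ⟩`, with
marginal probabilities `p^{(j)}_{i_j}` and unit vectors `|α^{(j)}_{i_j}⟩` realizing the
decompositions `ρ_{A_j} = Σ_{i_j} p^{(j)}_{i_j} |α^{(j)}_{i_j}⟩⟨α^{(j)}_{i_j}|` of the
reduced states of `|α⟩⟨α|`, one has
`C_f(|α⟩) ≥ Σ_j Σ_{i_j : p^{(j)}_{i_j} > 0} p^{(j)}_{i_j} C_f(α^{(j)}_{i_j})`,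
then `C_f` is superadditive on n-partite density matrices:
`C_f(ρ) ≥ Σ_j C_f(ρ_{A_j})`. -/
theorem superadditivity_of_pure_condition_multipartite
    (f : (ι : Type) → [Fintype ι] → (ι → ℝ) → ℝ)
    (hf : ∀ (ι : Type) [Fintype ι] (v : ι → ℝ), (∀ i, 0 ≤ v i) → 0 ≤ f ι v)
    (hyp : ∀ (n : ℕ) (d : Fin n → ℕ) (c : (∀ j, Fin (d j)) → ℂ),
      (∑ x : (∀ j, Fin (d j)), ‖c x‖ ^ 2) = 1 →
      ∀ (α : (j : Fin n) → Fin (d j) → (Fin (d j) → ℂ)),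
        (∀ j i, IsUnitVec (α j i)) →
        (∀ j : Fin n,
          Matrix.of (fun i i' : Fin (d j) =>
            ∑ x : (∀ k, Fin (d k)),
              if x j = i then c x * (starRingEnd ℂ) (c (Function.update x j i')) else 0)
          = ∑ i : Fin (d j),
              Complex.ofReal (∑ x : (∀ k, Fin (d k)), if x j = i then ‖c x‖ ^ 2 else 0)
                • outer (α j i)) →
        pureCoh f c ≥
          ∑ j : Fin n, ∑ i : Fin (d j),
            (if 0 < (∑ x : (∀ k, Fin (d k)), if x j = i then ‖c x‖ ^ 2 else 0) then
              (∑ x : (∀ k, Fin (d k)), if x j = i then ‖c x‖ ^ 2 else 0) * pureCoh f (α j i)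
            else 0)) :
    ∀ (n : ℕ) (d : Fin n → ℕ) (ρ : Matrix (∀ j, Fin (d j)) (∀ j, Fin (d j)) ℂ),
      IsDensity ρ →
      mixedCoh f ρ ≥
        ∑ j : Fin n,
          mixedCoh f (Matrix.of (fun i i' : Fin (d j) =>
            ∑ x : (∀ k, Fin (d k)),
              if x j = i then ρ x (Function.update x j i') else 0)) := by
  intro n d ρ hρ
  classical
  have hpure0 : ∀ {ι : Type} [Fintype ι] (φ : ι → ℂ), 0 ≤ pureCoh f φ := by
    intro ι _ φ
    exact hf ι _ fun i => by positivity
  -- the reduced matrices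
  set red : (j : Fin n) → Matrix (Fin (d j)) (Fin (d j)) ℂ := fun j =>
    Matrix.of (fun i i' : Fin (d j) =>
      ∑ x : (∀ k, Fin (d k)),
        if x j = i then ρ x (Function.update x j i') else 0) with hred
  -- nonemptiness of the ensemble set of ρ
  obtain ⟨K0, p0, φ0, h01, h02, h03, h04⟩ := exists_ensemble ρ hρ
  rw [ge_iff_le, mixedCoh]
  refine le_csInf ⟨∑ k, p0 k * pureCoh f (φ0 k), K0, p0, φ0, h01, h02, h03, h04, rfl⟩ ?_
  rintro x ⟨K, p, φ, hp0, hp1, hunit, hdec, rfl⟩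
  -- choose the decompositions of the reduced states of each pure state
  set α : (k : Fin K) → (j : Fin n) → Fin (d j) → (Fin (d j) → ℂ) :=
    fun k j => Classical.choose (exists_alpha (φ k) j) with hαd
  have hα : ∀ k j, (∀ i, IsUnitVec (α k j i)) ∧
      Matrix.of (fun i i' : Fin (d j) =>
          ∑ x : (∀ m, Fin (d m)),
            if x j = i then φ k x * (starRingEnd ℂ) (φ k (Function.update x j i')) else 0)
        = ∑ i : Fin (d j),
            Complex.ofReal (∑ x : (∀ m, Fin (d m)), if x j = i then ‖φ k x‖ ^ 2 else 0)
              • outer (α k j i) :=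
    fun k j => Classical.choose_spec (exists_alpha (φ k) j)
  set q : (k : Fin K) → (j : Fin n) → Fin (d j) → ℝ := fun k j i =>
    ∑ x : (∀ m, Fin (d m)), if x j = i then ‖φ k x‖ ^ 2 else 0 with hqd
  have hq0 : ∀ k j i, 0 ≤ q k j i := by
    intro k j i
    refine Finset.sum_nonneg fun x _ => ?_
    by_cases h : x j = i <;> simp [h] <;> positivity
  have hqsum : ∀ k j, ∑ i, q k j i = 1 := by
    intro k j
    rw [hqd]
    rw [Finset.sum_comm]
    have : ∀ x : (∀ m, Fin (d m)),
        ∑ i : Fin (d j), (if x j = i then ‖φ k x‖ ^ 2 else 0) = ‖φ k x‖ ^ 2 := by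
      intro x
      rw [Finset.sum_ite_eq]
      simp
    simp only [this]
    exact hunit k
  -- the key pure-state inequality for each k
  have hk : ∀ k, pureCoh f (φ k) ≥
      ∑ j : Fin n, ∑ i : Fin (d j),
        (if 0 < q k j i then q k j i * pureCoh f (α k j i) else 0) :=
    fun k => hyp n d (φ k) (hunit k) (α k) (fun j i => (hα k j).1 i) (fun j => (hα k j).2)
  have hkk : ∀ k, ∑ j : Fin n, ∑ i : Fin (d j), q k j i * pureCoh f (α k j i)
      ≤ pureCoh f (φ k) := by
    intro k
    refine le_trans (le_of_eq ?_) (hk k)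
    refine Finset.sum_congr rfl fun j _ => Finset.sum_congr rfl fun i _ => ?_
    by_cases h : 0 < q k j i
    · rw [if_pos h]
    · rw [if_neg h, le_antisymm (not_lt.1 h) (hq0 k j i), zero_mul]
  -- the key per-party bound
  have key : ∀ j : Fin n, mixedCoh f (red j)
      ≤ ∑ k, ∑ i : Fin (d j), p k * (q k j i * pureCoh f (α k j i)) := by
    intro j
    set e : Fin K × Fin (d j) ≃ Fin (K * d j) := finProdFinEquiv with he
    set P : Fin (K * d j) → ℝ := fun m => p (e.symm m).1 * q (e.symm m).1 j (e.symm m).2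
      with hP
    set Φ : Fin (K * d j) → (Fin (d j) → ℂ) := fun m => α (e.symm m).1 j (e.symm m).2
      with hΦ
    have hmem : (∑ m, P m * pureCoh f (Φ m)) ∈
        { x : ℝ | ∃ (K' : ℕ) (p' : Fin K' → ℝ) (φ' : Fin K' → Fin (d j) → ℂ),
          (∀ k, 0 ≤ p' k) ∧ (∑ k, p' k) = 1 ∧ (∀ k, IsUnitVec (φ' k)) ∧
          red j = ∑ k, Complex.ofReal (p' k) • outer (φ' k) ∧
          x = ∑ k, p' k * pureCoh f (φ' k) } := by
      refine ⟨K * d j, P, Φ, ?_, ?_, ?_, ?_, rfl⟩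
      · intro m
        exact mul_nonneg (hp0 _) (hq0 _ _ _)
      · have h1 : ∑ m, P m = ∑ y : Fin K × Fin (d j), p y.1 * q y.1 j y.2 := by
          refine (Fintype.sum_equiv e
            (fun y : Fin K × Fin (d j) => p y.1 * q y.1 j y.2) P fun y => ?_).symm
          rw [hP]
          simp
        rw [h1, Fintype.sum_prod_type]
        have h2 : ∀ k : Fin K, ∑ i : Fin (d j), p k * q k j i = p k := by
          intro k
          rw [← Finset.mul_sum, hqsum, mul_one]
        simp only [h2]
        exact hp1
      · intro m
        exact (hα _ _).1 _
      · -- matrix identity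
        ext i i'
        have hRHS : (∑ m, Complex.ofReal (P m) • outer (Φ m)) i i'
            = ∑ y : Fin K × Fin (d j),
                Complex.ofReal (p y.1 * q y.1 j y.2) * (α y.1 j y.2 i
                  * (starRingEnd ℂ) (α y.1 j y.2 i')) := by
          rw [Matrix.sum_apply]
          refine (Fintype.sum_equiv e
            (fun y : Fin K × Fin (d j) =>
              Complex.ofReal (p y.1 * q y.1 j y.2) * (α y.1 j y.2 i
                * (starRingEnd ℂ) (α y.1 j y.2 i')))
            (fun m => (Complex.ofReal (P m) • outer (Φ m)) i i') fun y => ?_).symm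
          rw [hP, hΦ]
          simp [outer, smul_eq_mul]
        rw [hRHS, Fintype.sum_prod_type]
        -- expand the left side using hdec
        have hL : (red j) i i' = ∑ k : Fin K, Complex.ofReal (p k) *
            (∑ x : (∀ m, Fin (d m)),
              if x j = i then φ k x * (starRingEnd ℂ) (φ k (Function.update x j i'))
              else 0) := by
          rw [hred]
          simp only [Matrix.of_apply]
          rw [hdec]
          have h3 : ∀ x : (∀ m, Fin (d m)),
              (if x j = i then
                  (∑ k, Complex.ofReal (p k) • outer (φ k)) x (Function.update x j i')
                else 0)
              = ∑ k : Fin K, (if x j = i then Complex.ofReal (p k) *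
                  (φ k x * (starRingEnd ℂ) (φ k (Function.update x j i'))) else 0) := by
            intro x
            by_cases h : x j = i
            · rw [if_pos h, Matrix.sum_apply]
              refine Finset.sum_congr rfl fun k _ => ?_
              rw [if_pos h]
              simp [outer, smul_eq_mul]
            · simp [if_neg h]
          simp only [h3]
          rw [Finset.sum_comm]
          refine Finset.sum_congr rfl fun k _ => ?_
          rw [Finset.mul_sum]
          refine Finset.sum_congr rfl fun x _ => ?_
          by_cases h : x j = i <;> simp [h]
        rw [hL]
        refine Finset.sum_congr rfl fun k _ => ?_
        have h4 := congrFun (congrFun (congrArg (fun M => (M : Matrix (Fin (d j))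
          (Fin (d j)) ℂ)) ((hα k j).2)) i) i'
        simp only [Matrix.of_apply, Matrix.sum_apply] at h4
        rw [h4, Finset.mul_sum]
        refine Finset.sum_congr rfl fun m _ => ?_
        have hcoef : (∑ x : ((w : Fin n) → Fin (d w)), if x j = m then ‖φ k x‖ ^ 2 else 0)
            = q k j m := rfl
        simp only [Matrix.smul_apply, outer, Matrix.of_apply, smul_eq_mul, hcoef]
        push_cast
        ring
    have hbdd : BddBelow { x : ℝ | ∃ (K' : ℕ) (p' : Fin K' → ℝ)
        (φ' : Fin K' → Fin (d j) → ℂ),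
        (∀ k, 0 ≤ p' k) ∧ (∑ k, p' k) = 1 ∧ (∀ k, IsUnitVec (φ' k)) ∧
        red j = ∑ k, Complex.ofReal (p' k) • outer (φ' k) ∧
        x = ∑ k, p' k * pureCoh f (φ' k) } := by
      refine ⟨0, ?_⟩
      rintro y ⟨K', p', φ', hp0', -, -, -, rfl⟩
      exact Finset.sum_nonneg fun k _ => mul_nonneg (hp0' k) (hpure0 _)
    have hle : mixedCoh f (red j) ≤ ∑ m, P m * pureCoh f (Φ m) := csInf_le hbdd hmem
    refine hle.trans (le_of_eq ?_)
    have h5 : ∑ m, P m * pureCoh f (Φ m)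
        = ∑ y : Fin K × Fin (d j), p y.1 * q y.1 j y.2 * pureCoh f (α y.1 j y.2) := by
      refine (Fintype.sum_equiv e
        (fun y : Fin K × Fin (d j) => p y.1 * q y.1 j y.2 * pureCoh f (α y.1 j y.2))
        (fun m => P m * pureCoh f (Φ m)) fun y => ?_).symm
      rw [hP, hΦ]
      simp
    rw [h5, Fintype.sum_prod_type]
    refine Finset.sum_congr rfl fun k _ => Finset.sum_congr rfl fun i _ => ?_
    rw [mul_assoc]
  calc ∑ j : Fin n, mixedCoh f (red j)
      ≤ ∑ j : Fin n, ∑ k, ∑ i : Fin (d j), p k * (q k j i * pureCoh f (α k j i)) :=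
        Finset.sum_le_sum fun j _ => key j
    _ = ∑ k, p k * ∑ j : Fin n, ∑ i : Fin (d j), q k j i * pureCoh f (α k j i) := by
        rw [Finset.sum_comm]
        refine Finset.sum_congr rfl fun k _ => ?_
        rw [Finset.mul_sum]
        refine Finset.sum_congr rfl fun j _ => ?_
        rw [Finset.mul_sum]
    _ ≤ ∑ k, p k * pureCoh f (φ k) :=
        Finset.sum_le_sum fun k _ => mul_le_mul_of_nonneg_left (hkk k) (hp0 k)


end
end
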